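/- arXiv:0804.0436 — 2 statements merged into one kernel-verified Lean document; each statement's English description precedes it below -/
import Mathlib

section
/- Let 𝔐 = (V,⟨·,·⟩,A) be a model of neutral signature (2,2). If 𝔐 is null Osserman, then 𝔐 is Einstein: there is a constant c with ρ_A(x,y) = c⟨x,y⟩ for all x,y ∈ V. -/
open Matrix BigOperators

/-- `V = ℝ⁴`. -/
abbrev V4 : Type := Fin 4 → ℝ

/-- The neutral inner product of signature (2,2):
`⟨x,y⟩ = −x₁y₁ − x₂y₂ + x₃y₃ + x₄y₄`. -/
def nip (x y : V4) : ℝ := -(x 0 * y 0) - x 1 * y 1 + x 2 * y 2 + x 3 * y 3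

/-- The signs `ε₁ = ε₂ = −1`, `ε₃ = ε₄ = 1`. -/
def eps : Fin 4 → ℝ := ![-1, -1, 1, 1]

/-- The standard basis vectors `e i`. -/
def stdb (i : Fin 4) : V4 := fun j => if j = i then 1 else 0

/-- A 4-linear map `A : V⁴ → ℝ` (linearity in each slot). -/
def IsMultilinear (A : V4 → V4 → V4 → V4 → ℝ) : Prop :=
  (∀ (c : ℝ) (x x' y z w : V4), A (c • x + x') y z w = c * A x y z w + A x' y z w) ∧
  (∀ (c : ℝ) (x y y' z w : V4), A x (c • y + y') z w = c * A x y z w + A x y' z w) ∧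
  (∀ (c : ℝ) (x y z z' w : V4), A x y (c • z + z') w = c * A x y z w + A x y z' w) ∧
  (∀ (c : ℝ) (x y z w w' : V4), A x y z (c • w + w') = c * A x y z w + A x y z w')

/-- Curvature symmetries:
`A(x,y,z,v) = −A(y,x,z,v) = A(z,v,x,y)` and the first Bianchi identity. -/
def HasCurvSym (A : V4 → V4 → V4 → V4 → ℝ) : Prop :=
  (∀ x y z w, A x y z w = - A y x z w) ∧
  (∀ x y z w, A x y z w = A z w x y) ∧
  (∀ x y z w, A x y z w + A y z x w + A z x y w = 0)

/-- An algebraic curvature tensor on `(V,⟨·,·⟩)`. -/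
def IsModel (A : V4 → V4 → V4 → V4 → ℝ) : Prop := IsMultilinear A ∧ HasCurvSym A

/-- The Jacobi operator `J_A(x)`, as a matrix: it is the unique linear map with
`⟨J_A(x)y, z⟩ = A(y,x,x,z)`; its matrix entries are `J i j = ε i * A(e j, x, x, e i)`. -/
def jacobi (A : V4 → V4 → V4 → V4 → ℝ) (x : V4) : Matrix (Fin 4) (Fin 4) ℝ :=
  Matrix.of fun i j => eps i * A (stdb j) x x (stdb i)

/-- Two endomorphisms of `V` are similar (conjugate by an invertible linear map). -/
def MatSimilar (M N : Matrix (Fin 4) (Fin 4) ℝ) : Prop :=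
  ∃ L : Matrix (Fin 4) (Fin 4) ℝ, IsUnit L.det ∧ M * L = L * N

/-- Spacelike Osserman: the characteristic polynomial of `J_A` is constant on
unit spacelike vectors. -/
def SpacelikeOsserman (A : V4 → V4 → V4 → V4 → ℝ) : Prop :=
  ∀ u w : V4, nip u u = 1 → nip w w = 1 → (jacobi A u).charpoly = (jacobi A w).charpoly

/-- Timelike Osserman: the characteristic polynomial of `J_A` is constant on
unit timelike vectors. -/
def TimelikeOsserman (A : V4 → V4 → V4 → V4 → ℝ) : Prop :=
  ∀ u w : V4, nip u u = -1 → nip w w = -1 → (jacobi A u).charpoly = (jacobi A w).charpoly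

/-- Null Osserman: `J_A(v)` is nilpotent for every null vector `v`. -/
def NullOsserman (A : V4 → V4 → V4 → V4 → ℝ) : Prop :=
  ∀ v : V4, nip v v = 0 → IsNilpotent (jacobi A v)

/-- Spacelike Jordan Osserman: the Jordan normal form of `J_A` is constant on
unit spacelike vectors. -/
def SpacelikeJordanOsserman (A : V4 → V4 → V4 → V4 → ℝ) : Prop :=
  ∀ u w : V4, nip u u = 1 → nip w w = 1 → MatSimilar (jacobi A u) (jacobi A w)

/-- Timelike Jordan Osserman. -/
def TimelikeJordanOsserman (A : V4 → V4 → V4 → V4 → ℝ) : Prop :=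
  ∀ u w : V4, nip u u = -1 → nip w w = -1 → MatSimilar (jacobi A u) (jacobi A w)

/-- Null Jordan Osserman: the Jordan normal form of `J_A` is constant on
nonzero null vectors. -/
def NullJordanOsserman (A : V4 → V4 → V4 → V4 → ℝ) : Prop :=
  ∀ u w : V4, u ≠ 0 → w ≠ 0 → nip u u = 0 → nip w w = 0 →
    MatSimilar (jacobi A u) (jacobi A w)

/-- The Ricci tensor `ρ_A(x,y) = Σᵢ εᵢ A(eᵢ,x,y,eᵢ)`. -/
def ricci (A : V4 → V4 → V4 → V4 → ℝ) (x y : V4) : ℝ :=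
  ∑ i : Fin 4, eps i * A (stdb i) x y (stdb i)

/-- Einstein: `ρ_A = c⟨·,·⟩`. -/
def Einstein (A : V4 → V4 → V4 → V4 → ℝ) : Prop :=
  ∃ c : ℝ, ∀ x y : V4, ricci A x y = c * nip x y

/-- The scalar curvature `τ_A = Σᵢ εᵢ ρ_A(eᵢ,eᵢ)`. -/
def scal (A : V4 → V4 → V4 → V4 → ℝ) : ℝ :=
  ∑ i : Fin 4, eps i * ricci A (stdb i) (stdb i)

/-- The Weyl tensor. -/
noncomputable def weyl (A : V4 → V4 → V4 → V4 → ℝ) (x y z v : V4) : ℝ :=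
  A x y z v + (scal A / 6) * (nip y z * nip x v - nip x z * nip y v)
    - (1/2) * (ricci A y z * nip x v - ricci A x z * nip y v
        + ricci A x v * nip y z - ricci A y v * nip x z)

/-- A 2-vector `x ∧ y`, represented by its antisymmetric coefficient matrix. -/
def wedge (x y : V4) : Matrix (Fin 4) (Fin 4) ℝ :=
  Matrix.of fun i j => x i * y j - x j * y i

/-- The Weyl tensor as a symmetric bilinear form on 2-vectors, determined by
`W_A(x∧y, z∧v) = W_A(x,y,z,v)`. -/
noncomputable def weylForm (A : V4 → V4 → V4 → V4 → ℝ) (α β : Matrix (Fin 4) (Fin 4) ℝ) : ℝ :=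
  (1/4) * ∑ i : Fin 4, ∑ j : Fin 4, ∑ k : Fin 4, ∑ l : Fin 4,
    α i j * β k l * weyl A (stdb i) (stdb j) (stdb k) (stdb l)

/-- `E₁^ε = (1/√2)(e₁∧e₂ + ε e₃∧e₄)`, `E₂^ε = (1/√2)(e₁∧e₃ + ε e₂∧e₄)`,
`E₃^ε = (1/√2)(e₁∧e₄ − ε e₂∧e₃)`.  For `ε = 1` this is the standard basis of the
self-dual 2-vectors `Λ⁺`; for `ε = −1`, of the anti-self-dual 2-vectors `Λ⁻`. -/
noncomputable def Evec (ε : ℝ) : Fin 3 → Matrix (Fin 4) (Fin 4) ℝ :=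
  ![(Real.sqrt 2)⁻¹ • (wedge (stdb 0) (stdb 1) + ε • wedge (stdb 2) (stdb 3)),
    (Real.sqrt 2)⁻¹ • (wedge (stdb 0) (stdb 2) + ε • wedge (stdb 1) (stdb 3)),
    (Real.sqrt 2)⁻¹ • (wedge (stdb 0) (stdb 3) - ε • wedge (stdb 1) (stdb 2))]

/-- The space `Λ⁺` of self-dual 2-vectors. -/
def LambdaPlus : Submodule ℝ (Matrix (Fin 4) (Fin 4) ℝ) :=
  Submodule.span ℝ (Set.range (Evec 1))

/-- The space `Λ⁻` of anti-self-dual 2-vectors. -/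
def LambdaMinus : Submodule ℝ (Matrix (Fin 4) (Fin 4) ℝ) :=
  Submodule.span ℝ (Set.range (Evec (-1)))

/-- Self-dual: the Weyl form vanishes identically on `Λ⁻`. -/
def SelfDual (A : V4 → V4 → V4 → V4 → ℝ) : Prop :=
  ∀ α ∈ LambdaMinus, ∀ β ∈ LambdaMinus, weylForm A α β = 0

/-- Anti-self-dual: the Weyl form vanishes identically on `Λ⁺`. -/
def AntiSelfDual (A : V4 → V4 → V4 → V4 → ℝ) : Prop :=
  ∀ α ∈ LambdaPlus, ∀ β ∈ LambdaPlus, weylForm A α β = 0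

/-- The curvature tensor `A⁰` of constant sectional curvature `+1`. -/
def Acurv0 (x y z v : V4) : ℝ := nip y z * nip x v - nip x z * nip y v

/-- The curvature tensor `A^Ψ` of a skew-adjoint endomorphism `Ψ`. -/
def AcurvPsi (Ψ : Matrix (Fin 4) (Fin 4) ℝ) (x y z v : V4) : ℝ :=
  nip (Ψ.mulVec y) z * nip (Ψ.mulVec x) v - nip (Ψ.mulVec x) z * nip (Ψ.mulVec y) v
    - 2 * nip (Ψ.mulVec x) y * nip (Ψ.mulVec z) v

/-- Skew-adjoint with respect to the neutral inner product. -/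
def SkewAdjointM (Ψ : Matrix (Fin 4) (Fin 4) ℝ) : Prop :=
  ∀ x y : V4, nip (Ψ.mulVec x) y = - nip x (Ψ.mulVec y)

/-- An orthogonal complex structure: skew-adjoint with `J² = −id`. -/
def OrthComplexStructure (J : Matrix (Fin 4) (Fin 4) ℝ) : Prop :=
  SkewAdjointM J ∧ J * J = -1

/-- An adapted paracomplex structure: skew-adjoint with `P² = id`. -/
def AdaptedParaStructure (P : Matrix (Fin 4) (Fin 4) ℝ) : Prop :=
  SkewAdjointM P ∧ P * P = 1

/-- A paraquaternionic structure. -/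
def Paraquaternionic (P₁ P₂ P₃ : Matrix (Fin 4) (Fin 4) ℝ) : Prop :=
  SkewAdjointM P₁ ∧ SkewAdjointM P₂ ∧ SkewAdjointM P₃ ∧
  P₁ * P₁ = -1 ∧ P₂ * P₂ = 1 ∧ P₃ * P₃ = 1 ∧
  P₁ * P₂ + P₂ * P₁ = 0 ∧ P₁ * P₃ + P₃ * P₁ = 0 ∧ P₂ * P₃ + P₃ * P₂ = 0

/-- The standard paraquaternionic structure: `Ψ₁`. -/
def psi1 : Matrix (Fin 4) (Fin 4) ℝ :=
  !![0, 1, 0, 0; -1, 0, 0, 0; 0, 0, 0, -1; 0, 0, 1, 0]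

/-- The standard paraquaternionic structure: `Ψ₂`. -/
def psi2 : Matrix (Fin 4) (Fin 4) ℝ :=
  !![0, 0, 1, 0; 0, 0, 0, 1; 1, 0, 0, 0; 0, 1, 0, 0]

/-- The standard paraquaternionic structure: `Ψ₃`. -/
def psi3 : Matrix (Fin 4) (Fin 4) ℝ :=
  !![0, 0, 0, 1; 0, 0, -1, 0; 0, -1, 0, 0; 1, 0, 0, 0]

/-- The curvature tensor `A_{κ₀,ξ}` of the Gilkey–Ivanova ansatz. -/
noncomputable def AKxi (κ₀ ξ11 ξ12 ξ13 ξ22 ξ23 ξ33 : ℝ) : V4 → V4 → V4 → V4 → ℝ :=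
  fun x y z w =>
    κ₀ * Acurv0 x y z w + (1/3) *
      (ξ11 * AcurvPsi psi1 x y z w + ξ22 * AcurvPsi psi2 x y z w
        + ξ33 * AcurvPsi psi3 x y z w + ξ12 * AcurvPsi (psi1 + psi2) x y z w
        + ξ13 * AcurvPsi (psi1 + psi3) x y z w + ξ23 * AcurvPsi (psi2 + psi3) x y z w)

/-- The `3 × 3` matrix `𝒥_{κ₀,ξ}`. -/
def Jmat (κ₀ ξ11 ξ12 ξ13 ξ22 ξ23 ξ33 : ℝ) : Matrix (Fin 3) (Fin 3) ℝ :=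
  κ₀ • (1 : Matrix (Fin 3) (Fin 3) ℝ) +
    !![ξ11 + ξ12 + ξ13, -ξ12, -ξ13;
       ξ12, -ξ22 - ξ12 - ξ23, -ξ23;
       ξ13, -ξ23, -ξ33 - ξ13 - ξ23]

/-- An oriented orthonormal basis of `(V,⟨·,·⟩)`: `b₁, b₂` timelike, `b₃, b₄` spacelike,
mutually orthogonal, with positively-oriented change-of-basis matrix. -/
def OrientedONB (b : Fin 4 → V4) : Prop :=
  (∀ i j : Fin 4, nip (b i) (b j) = if i = j then eps i else 0) ∧
  0 < (Matrix.of fun i j : Fin 4 => b j i).det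

/-- Lemma 2.1 (2): a null Osserman model of signature (2,2) is Einstein. -/
theorem null_osserman_implies_einstein (A : V4 → V4 → V4 → V4 → ℝ)
    (hA : IsModel A) (h : NullOsserman A) : Einstein A := by
  obtain ⟨⟨h1, h2, h3, h4⟩, hab, hpair, hbianchi⟩ := hA
  -- trace of Jacobi operator equals ricci v v; nilpotent ⇒ zero
  have htr : ∀ v : V4, nip v v = 0 → ricci A v v = 0 := by
    intro v hv
    have hnil := Matrix.isNilpotent_trace_of_isNilpotent (h v hv)
    have h0 : Matrix.trace (jacobi A v) = 0 := hnil.eq_zero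
    have heq : Matrix.trace (jacobi A v) = ricci A v v := by
      simp [Matrix.trace, jacobi, ricci, Matrix.diag]
    rw [heq] at h0; exact h0
  -- bilinearity of ricci
  have rlin₁ : ∀ (c : ℝ) (x x' y : V4),
      ricci A (c • x + x') y = c * ricci A x y + ricci A x' y := by
    intro c x x' y
    simp only [ricci, h2, mul_add, Finset.sum_add_distrib, Finset.mul_sum]
    congr 1
    exact Finset.sum_congr rfl fun i _ => by ring
  have rlin₂ : ∀ (c : ℝ) (x y y' : V4),
      ricci A x (c • y + y') = c * ricci A x y + ricci A x y' := by
    intro c x y y'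
    simp only [ricci, h3, mul_add, Finset.sum_add_distrib, Finset.mul_sum]
    congr 1
    exact Finset.sum_congr rfl fun i _ => by ring
  have rzero₁ : ∀ y : V4, ricci A 0 y = 0 := by
    intro y
    have := rlin₁ 1 0 0 y
    simp at this
    linarith
  have rsmul₁ : ∀ (c : ℝ) (x y : V4), ricci A (c • x) y = c * ricci A x y := by
    intro c x y
    have := rlin₁ c x 0 y
    simpa [rzero₁] using this
  have rzero₂ : ∀ x : V4, ricci A x 0 = 0 := by
    intro x
    have := rlin₂ 1 x 0 0
    simp at this
    linarith
  have rsmul₂ : ∀ (c : ℝ) (x y : V4), ricci A x (c • y) = c * ricci A x y := by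
    intro c x y
    have := rlin₂ c x y 0
    simpa [rzero₂] using this
  -- expansion in basis
  have key1 : ∀ x y : V4, ricci A x y =
      x 0 * ricci A (stdb 0) y + (x 1 * ricci A (stdb 1) y +
        (x 2 * ricci A (stdb 2) y + x 3 * ricci A (stdb 3) y)) := by
    intro x y
    have hx : x = x 0 • stdb 0 + (x 1 • stdb 1 + (x 2 • stdb 2 + x 3 • stdb 3)) := by
      funext j; fin_cases j <;> simp [stdb]
    have hval : ricci A (x 0 • stdb 0 + (x 1 • stdb 1 + (x 2 • stdb 2 + x 3 • stdb 3))) y =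
        x 0 * ricci A (stdb 0) y + (x 1 * ricci A (stdb 1) y +
          (x 2 * ricci A (stdb 2) y + x 3 * ricci A (stdb 3) y)) := by
      rw [rlin₁, rlin₁, rlin₁, rsmul₁]
    rw [← hx] at hval
    exact hval
  have key2 : ∀ x y : V4, ricci A x y =
      y 0 * ricci A x (stdb 0) + (y 1 * ricci A x (stdb 1) +
        (y 2 * ricci A x (stdb 2) + y 3 * ricci A x (stdb 3))) := by
    intro x y
    have hy : y = y 0 • stdb 0 + (y 1 • stdb 1 + (y 2 • stdb 2 + y 3 • stdb 3)) := by
      funext j; fin_cases j <;> simp [stdb]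
    have hval : ricci A x (y 0 • stdb 0 + (y 1 • stdb 1 + (y 2 • stdb 2 + y 3 • stdb 3))) =
        y 0 * ricci A x (stdb 0) + (y 1 * ricci A x (stdb 1) +
          (y 2 * ricci A x (stdb 2) + y 3 * ricci A x (stdb 3))) := by
      rw [rlin₂, rlin₂, rlin₂, rsmul₂]
    rw [← hy] at hval
    exact hval
  have hfull : ∀ x y : V4, ricci A x y =
      x 0 * y 0 * ricci A (stdb 0) (stdb 0) + x 0 * y 1 * ricci A (stdb 0) (stdb 1) +
      x 0 * y 2 * ricci A (stdb 0) (stdb 2) + x 0 * y 3 * ricci A (stdb 0) (stdb 3) +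
      x 1 * y 0 * ricci A (stdb 1) (stdb 0) + x 1 * y 1 * ricci A (stdb 1) (stdb 1) +
      x 1 * y 2 * ricci A (stdb 1) (stdb 2) + x 1 * y 3 * ricci A (stdb 1) (stdb 3) +
      x 2 * y 0 * ricci A (stdb 2) (stdb 0) + x 2 * y 1 * ricci A (stdb 2) (stdb 1) +
      x 2 * y 2 * ricci A (stdb 2) (stdb 2) + x 2 * y 3 * ricci A (stdb 2) (stdb 3) +
      x 3 * y 0 * ricci A (stdb 3) (stdb 0) + x 3 * y 1 * ricci A (stdb 3) (stdb 1) +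
      x 3 * y 2 * ricci A (stdb 3) (stdb 2) + x 3 * y 3 * ricci A (stdb 3) (stdb 3) := by
    intro x y
    rw [key1 x y, key2 (stdb 0) y, key2 (stdb 1) y, key2 (stdb 2) y, key2 (stdb 3) y]
    ring
  -- symmetry of ricci
  have habl : ∀ a b c d : V4, A a b c d = - A a b d c := by
    intro a b c d
    rw [hpair a b c d, hab c d a b, ← hpair d c a b]
  have hsym : ∀ x y : V4, ricci A x y = ricci A y x := by
    intro x y
    unfold ricci
    apply Finset.sum_congr rfl
    intro i _
    congr 1
    rw [hpair (stdb i) x y (stdb i), hab y (stdb i) (stdb i) x, habl (stdb i) y (stdb i) x]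
    ring
  -- derive equations from null vectors
  have mk : ∀ v : V4, nip v v = 0 →
      v 0 * v 0 * ricci A (stdb 0) (stdb 0) + v 0 * v 1 * ricci A (stdb 0) (stdb 1) +
      v 0 * v 2 * ricci A (stdb 0) (stdb 2) + v 0 * v 3 * ricci A (stdb 0) (stdb 3) +
      v 1 * v 0 * ricci A (stdb 1) (stdb 0) + v 1 * v 1 * ricci A (stdb 1) (stdb 1) +
      v 1 * v 2 * ricci A (stdb 1) (stdb 2) + v 1 * v 3 * ricci A (stdb 1) (stdb 3) +
      v 2 * v 0 * ricci A (stdb 2) (stdb 0) + v 2 * v 1 * ricci A (stdb 2) (stdb 1) +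
      v 2 * v 2 * ricci A (stdb 2) (stdb 2) + v 2 * v 3 * ricci A (stdb 2) (stdb 3) +
      v 3 * v 0 * ricci A (stdb 3) (stdb 0) + v 3 * v 1 * ricci A (stdb 3) (stdb 1) +
      v 3 * v 2 * ricci A (stdb 3) (stdb 2) + v 3 * v 3 * ricci A (stdb 3) (stdb 3) = 0 := by
    intro v hv
    rw [← hfull v v]
    exact htr v hv
  have e1 := mk ![1,0,1,0] (by norm_num [nip, Matrix.cons_val_two, Matrix.cons_val_three])
  have e2 := mk ![1,0,-1,0] (by norm_num [nip, Matrix.cons_val_two, Matrix.cons_val_three])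
  have e3 := mk ![1,0,0,1] (by norm_num [nip, Matrix.cons_val_two, Matrix.cons_val_three])
  have e4 := mk ![1,0,0,-1] (by norm_num [nip, Matrix.cons_val_two, Matrix.cons_val_three])
  have e5 := mk ![0,1,1,0] (by norm_num [nip, Matrix.cons_val_two, Matrix.cons_val_three])
  have e6 := mk ![0,1,-1,0] (by norm_num [nip, Matrix.cons_val_two, Matrix.cons_val_three])
  have e7 := mk ![0,1,0,1] (by norm_num [nip, Matrix.cons_val_two, Matrix.cons_val_three])
  have e8 := mk ![0,1,0,-1] (by norm_num [nip, Matrix.cons_val_two, Matrix.cons_val_three])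
  have e9 := mk ![1,1,1,1] (by norm_num [nip, Matrix.cons_val_two, Matrix.cons_val_three])
  have e10 := mk ![1,1,1,-1] (by norm_num [nip, Matrix.cons_val_two, Matrix.cons_val_three])
  norm_num [Matrix.cons_val_two, Matrix.cons_val_three] at e1 e2 e3 e4 e5 e6 e7 e8 e9 e10
  have s01 := hsym (stdb 0) (stdb 1)
  have s02 := hsym (stdb 0) (stdb 2)
  have s03 := hsym (stdb 0) (stdb 3)
  have s12 := hsym (stdb 1) (stdb 2)
  have s13 := hsym (stdb 1) (stdb 3)
  have s23 := hsym (stdb 2) (stdb 3)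
  refine ⟨-(ricci A (stdb 0) (stdb 0)), fun x y => ?_⟩
  have H02 : ricci A (stdb 0) (stdb 2) = 0 := by linarith
  have H20 : ricci A (stdb 2) (stdb 0) = 0 := by linarith
  have H03 : ricci A (stdb 0) (stdb 3) = 0 := by linarith
  have H30 : ricci A (stdb 3) (stdb 0) = 0 := by linarith
  have H12 : ricci A (stdb 1) (stdb 2) = 0 := by linarith
  have H21 : ricci A (stdb 2) (stdb 1) = 0 := by linarith
  have H13 : ricci A (stdb 1) (stdb 3) = 0 := by linarith
  have H31 : ricci A (stdb 3) (stdb 1) = 0 := by linarith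
  have H22 : ricci A (stdb 2) (stdb 2) = -ricci A (stdb 0) (stdb 0) := by linarith
  have H33 : ricci A (stdb 3) (stdb 3) = -ricci A (stdb 0) (stdb 0) := by linarith
  have H11 : ricci A (stdb 1) (stdb 1) = ricci A (stdb 0) (stdb 0) := by linarith
  have H01 : ricci A (stdb 0) (stdb 1) = 0 := by linarith
  have H10 : ricci A (stdb 1) (stdb 0) = 0 := by linarith
  have H23 : ricci A (stdb 2) (stdb 3) = 0 := by linarith
  have H32 : ricci A (stdb 3) (stdb 2) = 0 := by linarith
  rw [hfull x y, H01, H02, H03, H10, H12, H13, H20, H21, H23, H30, H31, H32, H11, H22, H33]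
  simp only [nip]
  ring
end

section
/- Let 𝔐 = (V,⟨·,·⟩,A) be an Einstein model of neutral signature (2,2) and write A_{ijkl} = A(e_i,e_j,e_k,e_l). For ε = +1 (with the basis {E₁⁺,E₂⁺,E₃⁺} of Λ⁺) and ε = −1 (with the basis {E₁⁻,E₂⁻,E₃⁻} of Λ⁻), the values of the Weyl bilinear form are: W_A(E₁^ε,E₁^ε) = σ₁/3, W_A(E₂^ε,E₂^ε) = σ₂/3, W_A(E₃^ε,E₃^ε) = σ₃/3, W_A(E₁^ε,E₂^ε) = A_{1213} + ε A_{1224}, W_A(E₁^ε,E₃^ε) = A_{1214} − ε A_{1223}, W_A(E₂^ε,E₃^ε) = A_{1314} − ε A_{1323}, where σ₁ = 2A_{1212} + 3εA_{1234} + A_{1313} + A_{1414}, σ₂ = A_{1212} + 2A_{1313} + 3εA_{1324} − A_{1414}, σ₃ = A_{1212} + 3εA_{1234} − A_{1313} − 3εA_{1324} + 2A_{1414}. -/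
open Matrix BigOperators

/-- The components `A(e_i, e_j, e_k, e_l)`. -/
def Acomp (A : V4 → V4 → V4 → V4 → ℝ) (i j k l : Fin 4) : ℝ :=
  A (stdb i) (stdb j) (stdb k) (stdb l)

set_option maxHeartbeats 16000000 in
/-- Lemma 2.2: the values of the Weyl bilinear form of an Einstein model on the
bases `{E₁^ε, E₂^ε, E₃^ε}` of `Λ⁺` (`ε = 1`) and `Λ⁻` (`ε = −1`). -/
theorem weyl_form_on_selfdual_basis (A : V4 → V4 → V4 → V4 → ℝ)
    (hA : IsModel A) (hE : Einstein A) (ε : ℝ) (hε : ε = 1 ∨ ε = -1) :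
    weylForm A (Evec ε 0) (Evec ε 0) =
      (2 * Acomp A 0 1 0 1 + 3 * ε * Acomp A 0 1 2 3 + Acomp A 0 2 0 2
        + Acomp A 0 3 0 3) / 3 ∧
    weylForm A (Evec ε 1) (Evec ε 1) =
      (Acomp A 0 1 0 1 + 2 * Acomp A 0 2 0 2 + 3 * ε * Acomp A 0 2 1 3
        - Acomp A 0 3 0 3) / 3 ∧
    weylForm A (Evec ε 2) (Evec ε 2) =
      (Acomp A 0 1 0 1 + 3 * ε * Acomp A 0 1 2 3 - Acomp A 0 2 0 2
        - 3 * ε * Acomp A 0 2 1 3 + 2 * Acomp A 0 3 0 3) / 3 ∧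
    weylForm A (Evec ε 0) (Evec ε 1) = Acomp A 0 1 0 2 + ε * Acomp A 0 1 1 3 ∧
    weylForm A (Evec ε 0) (Evec ε 2) = Acomp A 0 1 0 3 - ε * Acomp A 0 1 1 2 ∧
    weylForm A (Evec ε 1) (Evec ε 2) = Acomp A 0 2 0 3 - ε * Acomp A 0 2 1 2 := by
  obtain ⟨hml, h1, h2, h3⟩ := hA
  obtain ⟨c, hc⟩ := hE
  have h1' : ∀ x y z w : V4, A x y z w = - A x y w z := fun x y z w => by
    rw [h2 x y z w, h1 z w x y, h2 w z x y]
  have hz1 : ∀ x z w : V4, A x x z w = 0 := fun x z w => by have := h1 x x z w; linarith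
  have hz2 : ∀ x y z : V4, A x y z z = 0 := fun x y z => by have := h1' x y z z; linarith
  have r0110 : A (stdb 0) (stdb 1) (stdb 1) (stdb 0) = -(A (stdb 0) (stdb 1) (stdb 0) (stdb 1)) := by linear_combination (h1' (stdb 0) (stdb 1) (stdb 1) (stdb 0))
  have r0120 : A (stdb 0) (stdb 1) (stdb 2) (stdb 0) = -(A (stdb 0) (stdb 1) (stdb 0) (stdb 2)) := by linear_combination (h1' (stdb 0) (stdb 1) (stdb 2) (stdb 0))
  have r0121 : A (stdb 0) (stdb 1) (stdb 2) (stdb 1) = -(A (stdb 0) (stdb 1) (stdb 1) (stdb 2)) := by linear_combination (h1' (stdb 0) (stdb 1) (stdb 2) (stdb 1))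
  have r0130 : A (stdb 0) (stdb 1) (stdb 3) (stdb 0) = -(A (stdb 0) (stdb 1) (stdb 0) (stdb 3)) := by linear_combination (h1' (stdb 0) (stdb 1) (stdb 3) (stdb 0))
  have r0131 : A (stdb 0) (stdb 1) (stdb 3) (stdb 1) = -(A (stdb 0) (stdb 1) (stdb 1) (stdb 3)) := by linear_combination (h1' (stdb 0) (stdb 1) (stdb 3) (stdb 1))
  have r0132 : A (stdb 0) (stdb 1) (stdb 3) (stdb 2) = -(A (stdb 0) (stdb 1) (stdb 2) (stdb 3)) := by linear_combination (h1' (stdb 0) (stdb 1) (stdb 3) (stdb 2))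
  have r0201 : A (stdb 0) (stdb 2) (stdb 0) (stdb 1) = A (stdb 0) (stdb 1) (stdb 0) (stdb 2) := by linear_combination (h2 (stdb 0) (stdb 2) (stdb 0) (stdb 1))
  have r0210 : A (stdb 0) (stdb 2) (stdb 1) (stdb 0) = -(A (stdb 0) (stdb 1) (stdb 0) (stdb 2)) := by linear_combination (h1' (stdb 0) (stdb 2) (stdb 1) (stdb 0)) - (h2 (stdb 0) (stdb 2) (stdb 0) (stdb 1))
  have r0220 : A (stdb 0) (stdb 2) (stdb 2) (stdb 0) = -(A (stdb 0) (stdb 2) (stdb 0) (stdb 2)) := by linear_combination (h1' (stdb 0) (stdb 2) (stdb 2) (stdb 0))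
  have r0221 : A (stdb 0) (stdb 2) (stdb 2) (stdb 1) = -(A (stdb 0) (stdb 2) (stdb 1) (stdb 2)) := by linear_combination (h1' (stdb 0) (stdb 2) (stdb 2) (stdb 1))
  have r0230 : A (stdb 0) (stdb 2) (stdb 3) (stdb 0) = -(A (stdb 0) (stdb 2) (stdb 0) (stdb 3)) := by linear_combination (h1' (stdb 0) (stdb 2) (stdb 3) (stdb 0))
  have r0231 : A (stdb 0) (stdb 2) (stdb 3) (stdb 1) = -(A (stdb 0) (stdb 2) (stdb 1) (stdb 3)) := by linear_combination (h1' (stdb 0) (stdb 2) (stdb 3) (stdb 1))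
  have r0232 : A (stdb 0) (stdb 2) (stdb 3) (stdb 2) = -(A (stdb 0) (stdb 2) (stdb 2) (stdb 3)) := by linear_combination (h1' (stdb 0) (stdb 2) (stdb 3) (stdb 2))
  have r0301 : A (stdb 0) (stdb 3) (stdb 0) (stdb 1) = A (stdb 0) (stdb 1) (stdb 0) (stdb 3) := by linear_combination (h2 (stdb 0) (stdb 3) (stdb 0) (stdb 1))
  have r0302 : A (stdb 0) (stdb 3) (stdb 0) (stdb 2) = A (stdb 0) (stdb 2) (stdb 0) (stdb 3) := by linear_combination (h2 (stdb 0) (stdb 3) (stdb 0) (stdb 2))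
  have r0310 : A (stdb 0) (stdb 3) (stdb 1) (stdb 0) = -(A (stdb 0) (stdb 1) (stdb 0) (stdb 3)) := by linear_combination (h1' (stdb 0) (stdb 3) (stdb 1) (stdb 0)) - (h2 (stdb 0) (stdb 3) (stdb 0) (stdb 1))
  have r0320 : A (stdb 0) (stdb 3) (stdb 2) (stdb 0) = -(A (stdb 0) (stdb 2) (stdb 0) (stdb 3)) := by linear_combination (h1' (stdb 0) (stdb 3) (stdb 2) (stdb 0)) - (h2 (stdb 0) (stdb 3) (stdb 0) (stdb 2))
  have r0321 : A (stdb 0) (stdb 3) (stdb 2) (stdb 1) = -(A (stdb 0) (stdb 3) (stdb 1) (stdb 2)) := by linear_combination (h1' (stdb 0) (stdb 3) (stdb 2) (stdb 1))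
  have r0330 : A (stdb 0) (stdb 3) (stdb 3) (stdb 0) = -(A (stdb 0) (stdb 3) (stdb 0) (stdb 3)) := by linear_combination (h1' (stdb 0) (stdb 3) (stdb 3) (stdb 0))
  have r0331 : A (stdb 0) (stdb 3) (stdb 3) (stdb 1) = -(A (stdb 0) (stdb 3) (stdb 1) (stdb 3)) := by linear_combination (h1' (stdb 0) (stdb 3) (stdb 3) (stdb 1))
  have r0332 : A (stdb 0) (stdb 3) (stdb 3) (stdb 2) = -(A (stdb 0) (stdb 3) (stdb 2) (stdb 3)) := by linear_combination (h1' (stdb 0) (stdb 3) (stdb 3) (stdb 2))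
  have r1001 : A (stdb 1) (stdb 0) (stdb 0) (stdb 1) = -(A (stdb 0) (stdb 1) (stdb 0) (stdb 1)) := by linear_combination (h1 (stdb 1) (stdb 0) (stdb 0) (stdb 1))
  have r1002 : A (stdb 1) (stdb 0) (stdb 0) (stdb 2) = -(A (stdb 0) (stdb 1) (stdb 0) (stdb 2)) := by linear_combination (h1 (stdb 1) (stdb 0) (stdb 0) (stdb 2))
  have r1003 : A (stdb 1) (stdb 0) (stdb 0) (stdb 3) = -(A (stdb 0) (stdb 1) (stdb 0) (stdb 3)) := by linear_combination (h1 (stdb 1) (stdb 0) (stdb 0) (stdb 3))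
  have r1010 : A (stdb 1) (stdb 0) (stdb 1) (stdb 0) = A (stdb 0) (stdb 1) (stdb 0) (stdb 1) := by linear_combination (h1 (stdb 1) (stdb 0) (stdb 1) (stdb 0)) - (h1' (stdb 0) (stdb 1) (stdb 1) (stdb 0))
  have r1012 : A (stdb 1) (stdb 0) (stdb 1) (stdb 2) = -(A (stdb 0) (stdb 1) (stdb 1) (stdb 2)) := by linear_combination (h1 (stdb 1) (stdb 0) (stdb 1) (stdb 2))
  have r1013 : A (stdb 1) (stdb 0) (stdb 1) (stdb 3) = -(A (stdb 0) (stdb 1) (stdb 1) (stdb 3)) := by linear_combination (h1 (stdb 1) (stdb 0) (stdb 1) (stdb 3))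
  have r1020 : A (stdb 1) (stdb 0) (stdb 2) (stdb 0) = A (stdb 0) (stdb 1) (stdb 0) (stdb 2) := by linear_combination (h1 (stdb 1) (stdb 0) (stdb 2) (stdb 0)) - (h1' (stdb 0) (stdb 1) (stdb 2) (stdb 0))
  have r1021 : A (stdb 1) (stdb 0) (stdb 2) (stdb 1) = A (stdb 0) (stdb 1) (stdb 1) (stdb 2) := by linear_combination (h1 (stdb 1) (stdb 0) (stdb 2) (stdb 1)) - (h1' (stdb 0) (stdb 1) (stdb 2) (stdb 1))
  have r1023 : A (stdb 1) (stdb 0) (stdb 2) (stdb 3) = -(A (stdb 0) (stdb 1) (stdb 2) (stdb 3)) := by linear_combination (h1 (stdb 1) (stdb 0) (stdb 2) (stdb 3))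
  have r1030 : A (stdb 1) (stdb 0) (stdb 3) (stdb 0) = A (stdb 0) (stdb 1) (stdb 0) (stdb 3) := by linear_combination (h1 (stdb 1) (stdb 0) (stdb 3) (stdb 0)) - (h1' (stdb 0) (stdb 1) (stdb 3) (stdb 0))
  have r1031 : A (stdb 1) (stdb 0) (stdb 3) (stdb 1) = A (stdb 0) (stdb 1) (stdb 1) (stdb 3) := by linear_combination (h1 (stdb 1) (stdb 0) (stdb 3) (stdb 1)) - (h1' (stdb 0) (stdb 1) (stdb 3) (stdb 1))
  have r1032 : A (stdb 1) (stdb 0) (stdb 3) (stdb 2) = A (stdb 0) (stdb 1) (stdb 2) (stdb 3) := by linear_combination (h1 (stdb 1) (stdb 0) (stdb 3) (stdb 2)) - (h1' (stdb 0) (stdb 1) (stdb 3) (stdb 2))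
  have r1201 : A (stdb 1) (stdb 2) (stdb 0) (stdb 1) = A (stdb 0) (stdb 1) (stdb 1) (stdb 2) := by linear_combination (h2 (stdb 1) (stdb 2) (stdb 0) (stdb 1))
  have r1202 : A (stdb 1) (stdb 2) (stdb 0) (stdb 2) = A (stdb 0) (stdb 2) (stdb 1) (stdb 2) := by linear_combination (h2 (stdb 1) (stdb 2) (stdb 0) (stdb 2))
  have r1203 : A (stdb 1) (stdb 2) (stdb 0) (stdb 3) = A (stdb 0) (stdb 3) (stdb 1) (stdb 2) := by linear_combination (h2 (stdb 1) (stdb 2) (stdb 0) (stdb 3))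
  have r1210 : A (stdb 1) (stdb 2) (stdb 1) (stdb 0) = -(A (stdb 0) (stdb 1) (stdb 1) (stdb 2)) := by linear_combination (h1' (stdb 1) (stdb 2) (stdb 1) (stdb 0)) - (h2 (stdb 1) (stdb 2) (stdb 0) (stdb 1))
  have r1220 : A (stdb 1) (stdb 2) (stdb 2) (stdb 0) = -(A (stdb 0) (stdb 2) (stdb 1) (stdb 2)) := by linear_combination (h1' (stdb 1) (stdb 2) (stdb 2) (stdb 0)) - (h2 (stdb 1) (stdb 2) (stdb 0) (stdb 2))
  have r1221 : A (stdb 1) (stdb 2) (stdb 2) (stdb 1) = -(A (stdb 1) (stdb 2) (stdb 1) (stdb 2)) := by linear_combination (h1' (stdb 1) (stdb 2) (stdb 2) (stdb 1))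
  have r1230 : A (stdb 1) (stdb 2) (stdb 3) (stdb 0) = -(A (stdb 0) (stdb 3) (stdb 1) (stdb 2)) := by linear_combination (h1' (stdb 1) (stdb 2) (stdb 3) (stdb 0)) - (h2 (stdb 1) (stdb 2) (stdb 0) (stdb 3))
  have r1231 : A (stdb 1) (stdb 2) (stdb 3) (stdb 1) = -(A (stdb 1) (stdb 2) (stdb 1) (stdb 3)) := by linear_combination (h1' (stdb 1) (stdb 2) (stdb 3) (stdb 1))
  have r1232 : A (stdb 1) (stdb 2) (stdb 3) (stdb 2) = -(A (stdb 1) (stdb 2) (stdb 2) (stdb 3)) := by linear_combination (h1' (stdb 1) (stdb 2) (stdb 3) (stdb 2))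
  have r1301 : A (stdb 1) (stdb 3) (stdb 0) (stdb 1) = A (stdb 0) (stdb 1) (stdb 1) (stdb 3) := by linear_combination (h2 (stdb 1) (stdb 3) (stdb 0) (stdb 1))
  have r1302 : A (stdb 1) (stdb 3) (stdb 0) (stdb 2) = A (stdb 0) (stdb 2) (stdb 1) (stdb 3) := by linear_combination (h2 (stdb 1) (stdb 3) (stdb 0) (stdb 2))
  have r1303 : A (stdb 1) (stdb 3) (stdb 0) (stdb 3) = A (stdb 0) (stdb 3) (stdb 1) (stdb 3) := by linear_combination (h2 (stdb 1) (stdb 3) (stdb 0) (stdb 3))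
  have r1310 : A (stdb 1) (stdb 3) (stdb 1) (stdb 0) = -(A (stdb 0) (stdb 1) (stdb 1) (stdb 3)) := by linear_combination (h1' (stdb 1) (stdb 3) (stdb 1) (stdb 0)) - (h2 (stdb 1) (stdb 3) (stdb 0) (stdb 1))
  have r1312 : A (stdb 1) (stdb 3) (stdb 1) (stdb 2) = A (stdb 1) (stdb 2) (stdb 1) (stdb 3) := by linear_combination (h2 (stdb 1) (stdb 3) (stdb 1) (stdb 2))
  have r1320 : A (stdb 1) (stdb 3) (stdb 2) (stdb 0) = -(A (stdb 0) (stdb 2) (stdb 1) (stdb 3)) := by linear_combination (h1' (stdb 1) (stdb 3) (stdb 2) (stdb 0)) - (h2 (stdb 1) (stdb 3) (stdb 0) (stdb 2))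
  have r1321 : A (stdb 1) (stdb 3) (stdb 2) (stdb 1) = -(A (stdb 1) (stdb 2) (stdb 1) (stdb 3)) := by linear_combination (h1' (stdb 1) (stdb 3) (stdb 2) (stdb 1)) - (h2 (stdb 1) (stdb 3) (stdb 1) (stdb 2))
  have r1330 : A (stdb 1) (stdb 3) (stdb 3) (stdb 0) = -(A (stdb 0) (stdb 3) (stdb 1) (stdb 3)) := by linear_combination (h1' (stdb 1) (stdb 3) (stdb 3) (stdb 0)) - (h2 (stdb 1) (stdb 3) (stdb 0) (stdb 3))
  have r1331 : A (stdb 1) (stdb 3) (stdb 3) (stdb 1) = -(A (stdb 1) (stdb 3) (stdb 1) (stdb 3)) := by linear_combination (h1' (stdb 1) (stdb 3) (stdb 3) (stdb 1))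
  have r1332 : A (stdb 1) (stdb 3) (stdb 3) (stdb 2) = -(A (stdb 1) (stdb 3) (stdb 2) (stdb 3)) := by linear_combination (h1' (stdb 1) (stdb 3) (stdb 3) (stdb 2))
  have r2001 : A (stdb 2) (stdb 0) (stdb 0) (stdb 1) = -(A (stdb 0) (stdb 1) (stdb 0) (stdb 2)) := by linear_combination (h1 (stdb 2) (stdb 0) (stdb 0) (stdb 1)) - (h2 (stdb 0) (stdb 2) (stdb 0) (stdb 1))
  have r2002 : A (stdb 2) (stdb 0) (stdb 0) (stdb 2) = -(A (stdb 0) (stdb 2) (stdb 0) (stdb 2)) := by linear_combination (h1 (stdb 2) (stdb 0) (stdb 0) (stdb 2))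
  have r2003 : A (stdb 2) (stdb 0) (stdb 0) (stdb 3) = -(A (stdb 0) (stdb 2) (stdb 0) (stdb 3)) := by linear_combination (h1 (stdb 2) (stdb 0) (stdb 0) (stdb 3))
  have r2010 : A (stdb 2) (stdb 0) (stdb 1) (stdb 0) = A (stdb 0) (stdb 1) (stdb 0) (stdb 2) := by linear_combination (h1 (stdb 2) (stdb 0) (stdb 1) (stdb 0)) - (h1' (stdb 0) (stdb 2) (stdb 1) (stdb 0)) + (h2 (stdb 0) (stdb 2) (stdb 0) (stdb 1))
  have r2012 : A (stdb 2) (stdb 0) (stdb 1) (stdb 2) = -(A (stdb 0) (stdb 2) (stdb 1) (stdb 2)) := by linear_combination (h1 (stdb 2) (stdb 0) (stdb 1) (stdb 2))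
  have r2013 : A (stdb 2) (stdb 0) (stdb 1) (stdb 3) = -(A (stdb 0) (stdb 2) (stdb 1) (stdb 3)) := by linear_combination (h1 (stdb 2) (stdb 0) (stdb 1) (stdb 3))
  have r2020 : A (stdb 2) (stdb 0) (stdb 2) (stdb 0) = A (stdb 0) (stdb 2) (stdb 0) (stdb 2) := by linear_combination (h1 (stdb 2) (stdb 0) (stdb 2) (stdb 0)) - (h1' (stdb 0) (stdb 2) (stdb 2) (stdb 0))
  have r2021 : A (stdb 2) (stdb 0) (stdb 2) (stdb 1) = A (stdb 0) (stdb 2) (stdb 1) (stdb 2) := by linear_combination (h1 (stdb 2) (stdb 0) (stdb 2) (stdb 1)) - (h1' (stdb 0) (stdb 2) (stdb 2) (stdb 1))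
  have r2023 : A (stdb 2) (stdb 0) (stdb 2) (stdb 3) = -(A (stdb 0) (stdb 2) (stdb 2) (stdb 3)) := by linear_combination (h1 (stdb 2) (stdb 0) (stdb 2) (stdb 3))
  have r2030 : A (stdb 2) (stdb 0) (stdb 3) (stdb 0) = A (stdb 0) (stdb 2) (stdb 0) (stdb 3) := by linear_combination (h1 (stdb 2) (stdb 0) (stdb 3) (stdb 0)) - (h1' (stdb 0) (stdb 2) (stdb 3) (stdb 0))
  have r2031 : A (stdb 2) (stdb 0) (stdb 3) (stdb 1) = A (stdb 0) (stdb 2) (stdb 1) (stdb 3) := by linear_combination (h1 (stdb 2) (stdb 0) (stdb 3) (stdb 1)) - (h1' (stdb 0) (stdb 2) (stdb 3) (stdb 1))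
  have r2032 : A (stdb 2) (stdb 0) (stdb 3) (stdb 2) = A (stdb 0) (stdb 2) (stdb 2) (stdb 3) := by linear_combination (h1 (stdb 2) (stdb 0) (stdb 3) (stdb 2)) - (h1' (stdb 0) (stdb 2) (stdb 3) (stdb 2))
  have r2101 : A (stdb 2) (stdb 1) (stdb 0) (stdb 1) = -(A (stdb 0) (stdb 1) (stdb 1) (stdb 2)) := by linear_combination (h1 (stdb 2) (stdb 1) (stdb 0) (stdb 1)) - (h2 (stdb 1) (stdb 2) (stdb 0) (stdb 1))
  have r2102 : A (stdb 2) (stdb 1) (stdb 0) (stdb 2) = -(A (stdb 0) (stdb 2) (stdb 1) (stdb 2)) := by linear_combination (h1 (stdb 2) (stdb 1) (stdb 0) (stdb 2)) - (h2 (stdb 1) (stdb 2) (stdb 0) (stdb 2))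
  have r2103 : A (stdb 2) (stdb 1) (stdb 0) (stdb 3) = -(A (stdb 0) (stdb 3) (stdb 1) (stdb 2)) := by linear_combination (h1 (stdb 2) (stdb 1) (stdb 0) (stdb 3)) - (h2 (stdb 1) (stdb 2) (stdb 0) (stdb 3))
  have r2110 : A (stdb 2) (stdb 1) (stdb 1) (stdb 0) = A (stdb 0) (stdb 1) (stdb 1) (stdb 2) := by linear_combination (h1 (stdb 2) (stdb 1) (stdb 1) (stdb 0)) - (h1' (stdb 1) (stdb 2) (stdb 1) (stdb 0)) + (h2 (stdb 1) (stdb 2) (stdb 0) (stdb 1))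
  have r2112 : A (stdb 2) (stdb 1) (stdb 1) (stdb 2) = -(A (stdb 1) (stdb 2) (stdb 1) (stdb 2)) := by linear_combination (h1 (stdb 2) (stdb 1) (stdb 1) (stdb 2))
  have r2113 : A (stdb 2) (stdb 1) (stdb 1) (stdb 3) = -(A (stdb 1) (stdb 2) (stdb 1) (stdb 3)) := by linear_combination (h1 (stdb 2) (stdb 1) (stdb 1) (stdb 3))
  have r2120 : A (stdb 2) (stdb 1) (stdb 2) (stdb 0) = A (stdb 0) (stdb 2) (stdb 1) (stdb 2) := by linear_combination (h1 (stdb 2) (stdb 1) (stdb 2) (stdb 0)) - (h1' (stdb 1) (stdb 2) (stdb 2) (stdb 0)) + (h2 (stdb 1) (stdb 2) (stdb 0) (stdb 2))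
  have r2121 : A (stdb 2) (stdb 1) (stdb 2) (stdb 1) = A (stdb 1) (stdb 2) (stdb 1) (stdb 2) := by linear_combination (h1 (stdb 2) (stdb 1) (stdb 2) (stdb 1)) - (h1' (stdb 1) (stdb 2) (stdb 2) (stdb 1))
  have r2123 : A (stdb 2) (stdb 1) (stdb 2) (stdb 3) = -(A (stdb 1) (stdb 2) (stdb 2) (stdb 3)) := by linear_combination (h1 (stdb 2) (stdb 1) (stdb 2) (stdb 3))
  have r2130 : A (stdb 2) (stdb 1) (stdb 3) (stdb 0) = A (stdb 0) (stdb 3) (stdb 1) (stdb 2) := by linear_combination (h1 (stdb 2) (stdb 1) (stdb 3) (stdb 0)) - (h1' (stdb 1) (stdb 2) (stdb 3) (stdb 0)) + (h2 (stdb 1) (stdb 2) (stdb 0) (stdb 3))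
  have r2131 : A (stdb 2) (stdb 1) (stdb 3) (stdb 1) = A (stdb 1) (stdb 2) (stdb 1) (stdb 3) := by linear_combination (h1 (stdb 2) (stdb 1) (stdb 3) (stdb 1)) - (h1' (stdb 1) (stdb 2) (stdb 3) (stdb 1))
  have r2132 : A (stdb 2) (stdb 1) (stdb 3) (stdb 2) = A (stdb 1) (stdb 2) (stdb 2) (stdb 3) := by linear_combination (h1 (stdb 2) (stdb 1) (stdb 3) (stdb 2)) - (h1' (stdb 1) (stdb 2) (stdb 3) (stdb 2))
  have r2301 : A (stdb 2) (stdb 3) (stdb 0) (stdb 1) = A (stdb 0) (stdb 1) (stdb 2) (stdb 3) := by linear_combination (h2 (stdb 2) (stdb 3) (stdb 0) (stdb 1))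
  have r2302 : A (stdb 2) (stdb 3) (stdb 0) (stdb 2) = A (stdb 0) (stdb 2) (stdb 2) (stdb 3) := by linear_combination (h2 (stdb 2) (stdb 3) (stdb 0) (stdb 2))
  have r2303 : A (stdb 2) (stdb 3) (stdb 0) (stdb 3) = A (stdb 0) (stdb 3) (stdb 2) (stdb 3) := by linear_combination (h2 (stdb 2) (stdb 3) (stdb 0) (stdb 3))
  have r2310 : A (stdb 2) (stdb 3) (stdb 1) (stdb 0) = -(A (stdb 0) (stdb 1) (stdb 2) (stdb 3)) := by linear_combination (h1' (stdb 2) (stdb 3) (stdb 1) (stdb 0)) - (h2 (stdb 2) (stdb 3) (stdb 0) (stdb 1))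
  have r2312 : A (stdb 2) (stdb 3) (stdb 1) (stdb 2) = A (stdb 1) (stdb 2) (stdb 2) (stdb 3) := by linear_combination (h2 (stdb 2) (stdb 3) (stdb 1) (stdb 2))
  have r2313 : A (stdb 2) (stdb 3) (stdb 1) (stdb 3) = A (stdb 1) (stdb 3) (stdb 2) (stdb 3) := by linear_combination (h2 (stdb 2) (stdb 3) (stdb 1) (stdb 3))
  have r2320 : A (stdb 2) (stdb 3) (stdb 2) (stdb 0) = -(A (stdb 0) (stdb 2) (stdb 2) (stdb 3)) := by linear_combination (h1' (stdb 2) (stdb 3) (stdb 2) (stdb 0)) - (h2 (stdb 2) (stdb 3) (stdb 0) (stdb 2))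
  have r2321 : A (stdb 2) (stdb 3) (stdb 2) (stdb 1) = -(A (stdb 1) (stdb 2) (stdb 2) (stdb 3)) := by linear_combination (h1' (stdb 2) (stdb 3) (stdb 2) (stdb 1)) - (h2 (stdb 2) (stdb 3) (stdb 1) (stdb 2))
  have r2330 : A (stdb 2) (stdb 3) (stdb 3) (stdb 0) = -(A (stdb 0) (stdb 3) (stdb 2) (stdb 3)) := by linear_combination (h1' (stdb 2) (stdb 3) (stdb 3) (stdb 0)) - (h2 (stdb 2) (stdb 3) (stdb 0) (stdb 3))
  have r2331 : A (stdb 2) (stdb 3) (stdb 3) (stdb 1) = -(A (stdb 1) (stdb 3) (stdb 2) (stdb 3)) := by linear_combination (h1' (stdb 2) (stdb 3) (stdb 3) (stdb 1)) - (h2 (stdb 2) (stdb 3) (stdb 1) (stdb 3))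
  have r2332 : A (stdb 2) (stdb 3) (stdb 3) (stdb 2) = -(A (stdb 2) (stdb 3) (stdb 2) (stdb 3)) := by linear_combination (h1' (stdb 2) (stdb 3) (stdb 3) (stdb 2))
  have r3001 : A (stdb 3) (stdb 0) (stdb 0) (stdb 1) = -(A (stdb 0) (stdb 1) (stdb 0) (stdb 3)) := by linear_combination (h1 (stdb 3) (stdb 0) (stdb 0) (stdb 1)) - (h2 (stdb 0) (stdb 3) (stdb 0) (stdb 1))
  have r3002 : A (stdb 3) (stdb 0) (stdb 0) (stdb 2) = -(A (stdb 0) (stdb 2) (stdb 0) (stdb 3)) := by linear_combination (h1 (stdb 3) (stdb 0) (stdb 0) (stdb 2)) - (h2 (stdb 0) (stdb 3) (stdb 0) (stdb 2))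
  have r3003 : A (stdb 3) (stdb 0) (stdb 0) (stdb 3) = -(A (stdb 0) (stdb 3) (stdb 0) (stdb 3)) := by linear_combination (h1 (stdb 3) (stdb 0) (stdb 0) (stdb 3))
  have r3010 : A (stdb 3) (stdb 0) (stdb 1) (stdb 0) = A (stdb 0) (stdb 1) (stdb 0) (stdb 3) := by linear_combination (h1 (stdb 3) (stdb 0) (stdb 1) (stdb 0)) - (h1' (stdb 0) (stdb 3) (stdb 1) (stdb 0)) + (h2 (stdb 0) (stdb 3) (stdb 0) (stdb 1))
  have r3012 : A (stdb 3) (stdb 0) (stdb 1) (stdb 2) = -(A (stdb 0) (stdb 3) (stdb 1) (stdb 2)) := by linear_combination (h1 (stdb 3) (stdb 0) (stdb 1) (stdb 2))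
  have r3013 : A (stdb 3) (stdb 0) (stdb 1) (stdb 3) = -(A (stdb 0) (stdb 3) (stdb 1) (stdb 3)) := by linear_combination (h1 (stdb 3) (stdb 0) (stdb 1) (stdb 3))
  have r3020 : A (stdb 3) (stdb 0) (stdb 2) (stdb 0) = A (stdb 0) (stdb 2) (stdb 0) (stdb 3) := by linear_combination (h1 (stdb 3) (stdb 0) (stdb 2) (stdb 0)) - (h1' (stdb 0) (stdb 3) (stdb 2) (stdb 0)) + (h2 (stdb 0) (stdb 3) (stdb 0) (stdb 2))
  have r3021 : A (stdb 3) (stdb 0) (stdb 2) (stdb 1) = A (stdb 0) (stdb 3) (stdb 1) (stdb 2) := by linear_combination (h1 (stdb 3) (stdb 0) (stdb 2) (stdb 1)) - (h1' (stdb 0) (stdb 3) (stdb 2) (stdb 1))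
  have r3023 : A (stdb 3) (stdb 0) (stdb 2) (stdb 3) = -(A (stdb 0) (stdb 3) (stdb 2) (stdb 3)) := by linear_combination (h1 (stdb 3) (stdb 0) (stdb 2) (stdb 3))
  have r3030 : A (stdb 3) (stdb 0) (stdb 3) (stdb 0) = A (stdb 0) (stdb 3) (stdb 0) (stdb 3) := by linear_combination (h1 (stdb 3) (stdb 0) (stdb 3) (stdb 0)) - (h1' (stdb 0) (stdb 3) (stdb 3) (stdb 0))
  have r3031 : A (stdb 3) (stdb 0) (stdb 3) (stdb 1) = A (stdb 0) (stdb 3) (stdb 1) (stdb 3) := by linear_combination (h1 (stdb 3) (stdb 0) (stdb 3) (stdb 1)) - (h1' (stdb 0) (stdb 3) (stdb 3) (stdb 1))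
  have r3032 : A (stdb 3) (stdb 0) (stdb 3) (stdb 2) = A (stdb 0) (stdb 3) (stdb 2) (stdb 3) := by linear_combination (h1 (stdb 3) (stdb 0) (stdb 3) (stdb 2)) - (h1' (stdb 0) (stdb 3) (stdb 3) (stdb 2))
  have r3101 : A (stdb 3) (stdb 1) (stdb 0) (stdb 1) = -(A (stdb 0) (stdb 1) (stdb 1) (stdb 3)) := by linear_combination (h1 (stdb 3) (stdb 1) (stdb 0) (stdb 1)) - (h2 (stdb 1) (stdb 3) (stdb 0) (stdb 1))
  have r3102 : A (stdb 3) (stdb 1) (stdb 0) (stdb 2) = -(A (stdb 0) (stdb 2) (stdb 1) (stdb 3)) := by linear_combination (h1 (stdb 3) (stdb 1) (stdb 0) (stdb 2)) - (h2 (stdb 1) (stdb 3) (stdb 0) (stdb 2))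
  have r3103 : A (stdb 3) (stdb 1) (stdb 0) (stdb 3) = -(A (stdb 0) (stdb 3) (stdb 1) (stdb 3)) := by linear_combination (h1 (stdb 3) (stdb 1) (stdb 0) (stdb 3)) - (h2 (stdb 1) (stdb 3) (stdb 0) (stdb 3))
  have r3110 : A (stdb 3) (stdb 1) (stdb 1) (stdb 0) = A (stdb 0) (stdb 1) (stdb 1) (stdb 3) := by linear_combination (h1 (stdb 3) (stdb 1) (stdb 1) (stdb 0)) - (h1' (stdb 1) (stdb 3) (stdb 1) (stdb 0)) + (h2 (stdb 1) (stdb 3) (stdb 0) (stdb 1))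
  have r3112 : A (stdb 3) (stdb 1) (stdb 1) (stdb 2) = -(A (stdb 1) (stdb 2) (stdb 1) (stdb 3)) := by linear_combination (h1 (stdb 3) (stdb 1) (stdb 1) (stdb 2)) - (h2 (stdb 1) (stdb 3) (stdb 1) (stdb 2))
  have r3113 : A (stdb 3) (stdb 1) (stdb 1) (stdb 3) = -(A (stdb 1) (stdb 3) (stdb 1) (stdb 3)) := by linear_combination (h1 (stdb 3) (stdb 1) (stdb 1) (stdb 3))
  have r3120 : A (stdb 3) (stdb 1) (stdb 2) (stdb 0) = A (stdb 0) (stdb 2) (stdb 1) (stdb 3) := by linear_combination (h1 (stdb 3) (stdb 1) (stdb 2) (stdb 0)) - (h1' (stdb 1) (stdb 3) (stdb 2) (stdb 0)) + (h2 (stdb 1) (stdb 3) (stdb 0) (stdb 2))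
  have r3121 : A (stdb 3) (stdb 1) (stdb 2) (stdb 1) = A (stdb 1) (stdb 2) (stdb 1) (stdb 3) := by linear_combination (h1 (stdb 3) (stdb 1) (stdb 2) (stdb 1)) - (h1' (stdb 1) (stdb 3) (stdb 2) (stdb 1)) + (h2 (stdb 1) (stdb 3) (stdb 1) (stdb 2))
  have r3123 : A (stdb 3) (stdb 1) (stdb 2) (stdb 3) = -(A (stdb 1) (stdb 3) (stdb 2) (stdb 3)) := by linear_combination (h1 (stdb 3) (stdb 1) (stdb 2) (stdb 3))
  have r3130 : A (stdb 3) (stdb 1) (stdb 3) (stdb 0) = A (stdb 0) (stdb 3) (stdb 1) (stdb 3) := by linear_combination (h1 (stdb 3) (stdb 1) (stdb 3) (stdb 0)) - (h1' (stdb 1) (stdb 3) (stdb 3) (stdb 0)) + (h2 (stdb 1) (stdb 3) (stdb 0) (stdb 3))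
  have r3131 : A (stdb 3) (stdb 1) (stdb 3) (stdb 1) = A (stdb 1) (stdb 3) (stdb 1) (stdb 3) := by linear_combination (h1 (stdb 3) (stdb 1) (stdb 3) (stdb 1)) - (h1' (stdb 1) (stdb 3) (stdb 3) (stdb 1))
  have r3132 : A (stdb 3) (stdb 1) (stdb 3) (stdb 2) = A (stdb 1) (stdb 3) (stdb 2) (stdb 3) := by linear_combination (h1 (stdb 3) (stdb 1) (stdb 3) (stdb 2)) - (h1' (stdb 1) (stdb 3) (stdb 3) (stdb 2))
  have r3201 : A (stdb 3) (stdb 2) (stdb 0) (stdb 1) = -(A (stdb 0) (stdb 1) (stdb 2) (stdb 3)) := by linear_combination (h1 (stdb 3) (stdb 2) (stdb 0) (stdb 1)) - (h2 (stdb 2) (stdb 3) (stdb 0) (stdb 1))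
  have r3202 : A (stdb 3) (stdb 2) (stdb 0) (stdb 2) = -(A (stdb 0) (stdb 2) (stdb 2) (stdb 3)) := by linear_combination (h1 (stdb 3) (stdb 2) (stdb 0) (stdb 2)) - (h2 (stdb 2) (stdb 3) (stdb 0) (stdb 2))
  have r3203 : A (stdb 3) (stdb 2) (stdb 0) (stdb 3) = -(A (stdb 0) (stdb 3) (stdb 2) (stdb 3)) := by linear_combination (h1 (stdb 3) (stdb 2) (stdb 0) (stdb 3)) - (h2 (stdb 2) (stdb 3) (stdb 0) (stdb 3))
  have r3210 : A (stdb 3) (stdb 2) (stdb 1) (stdb 0) = A (stdb 0) (stdb 1) (stdb 2) (stdb 3) := by linear_combination (h1 (stdb 3) (stdb 2) (stdb 1) (stdb 0)) - (h1' (stdb 2) (stdb 3) (stdb 1) (stdb 0)) + (h2 (stdb 2) (stdb 3) (stdb 0) (stdb 1))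
  have r3212 : A (stdb 3) (stdb 2) (stdb 1) (stdb 2) = -(A (stdb 1) (stdb 2) (stdb 2) (stdb 3)) := by linear_combination (h1 (stdb 3) (stdb 2) (stdb 1) (stdb 2)) - (h2 (stdb 2) (stdb 3) (stdb 1) (stdb 2))
  have r3213 : A (stdb 3) (stdb 2) (stdb 1) (stdb 3) = -(A (stdb 1) (stdb 3) (stdb 2) (stdb 3)) := by linear_combination (h1 (stdb 3) (stdb 2) (stdb 1) (stdb 3)) - (h2 (stdb 2) (stdb 3) (stdb 1) (stdb 3))
  have r3220 : A (stdb 3) (stdb 2) (stdb 2) (stdb 0) = A (stdb 0) (stdb 2) (stdb 2) (stdb 3) := by linear_combination (h1 (stdb 3) (stdb 2) (stdb 2) (stdb 0)) - (h1' (stdb 2) (stdb 3) (stdb 2) (stdb 0)) + (h2 (stdb 2) (stdb 3) (stdb 0) (stdb 2))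
  have r3221 : A (stdb 3) (stdb 2) (stdb 2) (stdb 1) = A (stdb 1) (stdb 2) (stdb 2) (stdb 3) := by linear_combination (h1 (stdb 3) (stdb 2) (stdb 2) (stdb 1)) - (h1' (stdb 2) (stdb 3) (stdb 2) (stdb 1)) + (h2 (stdb 2) (stdb 3) (stdb 1) (stdb 2))
  have r3223 : A (stdb 3) (stdb 2) (stdb 2) (stdb 3) = -(A (stdb 2) (stdb 3) (stdb 2) (stdb 3)) := by linear_combination (h1 (stdb 3) (stdb 2) (stdb 2) (stdb 3))
  have r3230 : A (stdb 3) (stdb 2) (stdb 3) (stdb 0) = A (stdb 0) (stdb 3) (stdb 2) (stdb 3) := by linear_combination (h1 (stdb 3) (stdb 2) (stdb 3) (stdb 0)) - (h1' (stdb 2) (stdb 3) (stdb 3) (stdb 0)) + (h2 (stdb 2) (stdb 3) (stdb 0) (stdb 3))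
  have r3231 : A (stdb 3) (stdb 2) (stdb 3) (stdb 1) = A (stdb 1) (stdb 3) (stdb 2) (stdb 3) := by linear_combination (h1 (stdb 3) (stdb 2) (stdb 3) (stdb 1)) - (h1' (stdb 2) (stdb 3) (stdb 3) (stdb 1)) + (h2 (stdb 2) (stdb 3) (stdb 1) (stdb 3))
  have r3232 : A (stdb 3) (stdb 2) (stdb 3) (stdb 2) = A (stdb 2) (stdb 3) (stdb 2) (stdb 3) := by linear_combination (h1 (stdb 3) (stdb 2) (stdb 3) (stdb 2)) - (h1' (stdb 2) (stdb 3) (stdb 3) (stdb 2))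

  have hsc : scal A = 4 * c := by
    simp only [scal, Fin.sum_univ_four, hc]
    norm_num [nip, stdb, eps, Matrix.cons_val_two, Matrix.cons_val_three, Matrix.head_cons, Matrix.tail_cons, show ((0:Fin 4) = 1) = False by decide, show ((0:Fin 4) = 2) = False by decide, show ((0:Fin 4) = 3) = False by decide, show ((1:Fin 4) = 0) = False by decide, show ((1:Fin 4) = 2) = False by decide, show ((1:Fin 4) = 3) = False by decide, show ((2:Fin 4) = 0) = False by decide, show ((2:Fin 4) = 1) = False by decide, show ((2:Fin 4) = 3) = False by decide, show ((3:Fin 4) = 0) = False by decide, show ((3:Fin 4) = 1) = False by decide, show ((3:Fin 4) = 2) = False by decide]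
    try ring
  have E00 := hc (stdb 0) (stdb 0)
  have E01 := hc (stdb 0) (stdb 1)
  have E02 := hc (stdb 0) (stdb 2)
  have E03 := hc (stdb 0) (stdb 3)
  have E11 := hc (stdb 1) (stdb 1)
  have E12 := hc (stdb 1) (stdb 2)
  have E13 := hc (stdb 1) (stdb 3)
  have E22 := hc (stdb 2) (stdb 2)
  have E23 := hc (stdb 2) (stdb 3)
  have E33 := hc (stdb 3) (stdb 3)
  have B := h3 (stdb 0) (stdb 1) (stdb 2) (stdb 3)
  simp only [ricci, Fin.sum_univ_four] at E00 E01 E02 E03 E11 E12 E13 E22 E23 E33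
  simp only [hz1, hz2, r0110, r0120, r0121, r0130, r0131, r0132, r0201, r0210, r0220, r0221, r0230, r0231, r0232, r0301, r0302, r0310, r0320, r0321, r0330, r0331, r0332, r1001, r1002, r1003, r1010, r1012, r1013, r1020, r1021, r1023, r1030, r1031, r1032, r1201, r1202, r1203, r1210, r1220, r1221, r1230, r1231, r1232, r1301, r1302, r1303, r1310, r1312, r1320, r1321, r1330, r1331, r1332, r2001, r2002, r2003, r2010, r2012, r2013, r2020, r2021, r2023, r2030, r2031, r2032, r2101, r2102, r2103, r2110, r2112, r2113, r2120, r2121, r2123, r2130, r2131, r2132, r2301, r2302, r2303, r2310, r2312, r2313, r2320, r2321, r2330, r2331, r2332, r3001, r3002, r3003, r3010, r3012, r3013, r3020, r3021, r3023, r3030, r3031, r3032, r3101, r3102, r3103, r3110, r3112, r3113, r3120, r3121, r3123, r3130, r3131, r3132, r3201, r3202, r3203, r3210, r3212, r3213, r3220, r3221, r3223, r3230, r3231, r3232] at E00 E01 E02 E03 E11 E12 E13 E22 E23 E33 B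
  norm_num [nip, stdb, eps, Matrix.cons_val_two, Matrix.cons_val_three, Matrix.head_cons, Matrix.tail_cons, show ((0:Fin 4) = 1) = False by decide, show ((0:Fin 4) = 2) = False by decide, show ((0:Fin 4) = 3) = False by decide, show ((1:Fin 4) = 0) = False by decide, show ((1:Fin 4) = 2) = False by decide, show ((1:Fin 4) = 3) = False by decide, show ((2:Fin 4) = 0) = False by decide, show ((2:Fin 4) = 1) = False by decide, show ((2:Fin 4) = 3) = False by decide, show ((3:Fin 4) = 0) = False by decide, show ((3:Fin 4) = 1) = False by decide, show ((3:Fin 4) = 2) = False by decide] at E00 E01 E02 E03 E11 E12 E13 E22 E23 E33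
  have hs2 : ((Real.sqrt 2 : ℝ))⁻¹ ^ 2 = 1/2 := by
    rw [inv_pow, Real.sq_sqrt] <;> norm_num
  rcases hε with rfl | rfl <;>
  refine ⟨?_, ?_, ?_, ?_, ?_, ?_⟩ <;>
  · simp only [weylForm, Evec, Fin.sum_univ_four, wedge, stdb, Matrix.smul_apply,
      Matrix.add_apply, Matrix.sub_apply, Matrix.of_apply, Matrix.cons_val_zero, Matrix.cons_val_one,
      Matrix.head_cons, Matrix.cons_val_two, Matrix.tail_cons, smul_eq_mul, Acomp]
    norm_num [Fin.isValue, show ((0:Fin 4) = 1) = False by decide, show ((0:Fin 4) = 2) = False by decide, show ((0:Fin 4) = 3) = False by decide, show ((1:Fin 4) = 0) = False by decide, show ((1:Fin 4) = 2) = False by decide, show ((1:Fin 4) = 3) = False by decide, show ((2:Fin 4) = 0) = False by decide, show ((2:Fin 4) = 1) = False by decide, show ((2:Fin 4) = 3) = False by decide, show ((3:Fin 4) = 0) = False by decide, show ((3:Fin 4) = 1) = False by decide, show ((3:Fin 4) = 2) = False by decide]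
    simp only [weyl, hsc, hc]
    norm_num [nip, stdb, show ((0:Fin 4) = 1) = False by decide, show ((0:Fin 4) = 2) = False by decide, show ((0:Fin 4) = 3) = False by decide, show ((1:Fin 4) = 0) = False by decide, show ((1:Fin 4) = 2) = False by decide, show ((1:Fin 4) = 3) = False by decide, show ((2:Fin 4) = 0) = False by decide, show ((2:Fin 4) = 1) = False by decide, show ((2:Fin 4) = 3) = False by decide, show ((3:Fin 4) = 0) = False by decide, show ((3:Fin 4) = 1) = False by decide, show ((3:Fin 4) = 2) = False by decide]
    simp only [hz1, hz2, r0110, r0120, r0121, r0130, r0131, r0132, r0201, r0210, r0220, r0221, r0230, r0231, r0232, r0301, r0302, r0310, r0320, r0321, r0330, r0331, r0332, r1001, r1002, r1003, r1010, r1012, r1013, r1020, r1021, r1023, r1030, r1031, r1032, r1201, r1202, r1203, r1210, r1220, r1221, r1230, r1231, r1232, r1301, r1302, r1303, r1310, r1312, r1320, r1321, r1330, r1331, r1332, r2001, r2002, r2003, r2010, r2012, r2013, r2020, r2021, r2023, r2030, r2031, r2032, r2101, r2102, r2103, r2110, r2112, r2113, r2120, r2121, r2123, r2130, r2131, r2132,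 r2301, r2302, r2303, r2310, r2312, r2313, r2320, r2321, r2330, r2331, r2332, r3001, r3002, r3003, r3010, r3012, r3013, r3020, r3021, r3023, r3030, r3031, r3032, r3101, r3102, r3103, r3110, r3112, r3113, r3120, r3121, r3123, r3130, r3131, r3132, r3201, r3202, r3203, r3210, r3212, r3213, r3220, r3221, r3223, r3230, r3231, r3232]
    ring_nf
    rw [hs2]
    linarith [E00, E01, E02, E03, E11, E12, E13, E22, E23, E33, B]
end
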